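/- Let f : ℝ → ℝ be C¹, odd, with s ↦ f(s)/s strictly increasing on (0,∞) and lim_{s→0} f(s)/s = 0. Then H(s) := s f(s) − 2∫₀ˢ f is an even function of s which is strictly increasing on [0,∞); in particular H(s) > H(λs) for every s ≠ 0 and λ ∈ (0,1). -/

import Mathlib

theorem stmt_2 (f : ℝ → ℝ)
    (hf : ContDiff ℝ 1 f)
    (hodd : ∀ s, f (-s) = -f s)
    (hlim : Filter.Tendsto (fun s => f s / s) (nhdsWithin 0 {0}ᶜ) (nhds 0))
    (hmono : StrictMonoOn (fun s => f s / s) (Set.Ioi (0:ℝ)))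
    (F H : ℝ → ℝ)
    (hF : ∀ s, F s = ∫ t in (0:ℝ)..s, f t)
    (hH : ∀ s, H s = s * f s - 2 * F s) :
    (∀ s, H (-s) = H s) ∧ StrictMonoOn H (Set.Ici (0:ℝ)) ∧
      (∀ s : ℝ, s ≠ 0 → ∀ l : ℝ, l ∈ Set.Ioo (0:ℝ) 1 → H s > H (l * s)) := by
  have hcont : Continuous f := hf.continuous
  have hf0 : f 0 = 0 := by
    have h := hodd 0
    simp at h
    linarith
  -- F is even
  have hFeven : ∀ s, F (-s) = F s := by
    intro s
    rw [hF, hF]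
    have h1 : (∫ x in (0:ℝ)..s, f (-x)) = ∫ x in (-s)..(0:ℝ), f x := by
      simpa using intervalIntegral.integral_comp_neg (a := (0:ℝ)) (b := s) f
    have h2 : (∫ x in (0:ℝ)..s, f (-x)) = -∫ x in (0:ℝ)..s, f x := by
      simp [hodd]
    have h3 : (∫ x in (0:ℝ)..(-s), f x) = -∫ x in (-s)..(0:ℝ), f x :=
      intervalIntegral.integral_symm _ _
    rw [h3, ← h1, h2, neg_neg]
  have hHeven : ∀ s, H (-s) = H s := by
    intro s
    rw [hH, hH, hFeven, hodd]
    ring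
  -- key strict monotonicity step
  have key : ∀ a b : ℝ, 0 ≤ a → a < b → H a < H b := by
    intro a b ha hab
    have hb : 0 < b := ha.trans_lt hab
    have hle : ∀ x ∈ Set.Ioc a b, f x ≤ x * (f b / b) := by
      intro x hx
      have hx0 : 0 < x := ha.trans_lt hx.1
      rcases eq_or_lt_of_le hx.2 with h | h
      · rw [h]; field_simp; exact le_rfl
      · have := hmono (Set.mem_Ioi.mpr hx0) (Set.mem_Ioi.mpr hb) h
        have h2 : f x / x ≤ f b / b := le_of_lt this
        calc f x = x * (f x / x) := by field_simp
          _ ≤ x * (f b / b) := by nlinarith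
    have hc : ∃ c ∈ Set.Icc a b, f c < c * (f b / b) := by
      refine ⟨(a + b) / 2, ⟨by linarith, by linarith⟩, ?_⟩
      have hc0 : 0 < (a + b) / 2 := by linarith
      have hcb : (a + b) / 2 < b := by linarith
      have := hmono (Set.mem_Ioi.mpr hc0) (Set.mem_Ioi.mpr hb) hcb
      have h2 : f ((a+b)/2) / ((a+b)/2) < f b / b := this
      calc f ((a+b)/2) = (a+b)/2 * (f ((a+b)/2) / ((a+b)/2)) := by field_simp
        _ < (a+b)/2 * (f b / b) := by nlinarith
    have hint : (∫ t in a..b, f t) < ∫ t in a..b, t * (f b / b) :=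
      intervalIntegral.integral_lt_integral_of_continuousOn_of_le_of_exists_lt hab
        hcont.continuousOn (by fun_prop) hle hc
    have hval : (∫ t in a..b, t * (f b / b)) = (b ^ 2 - a ^ 2) / 2 * (f b / b) := by
      rw [intervalIntegral.integral_mul_const, integral_id]
    have hFab : F b - F a = ∫ t in a..b, f t := by
      rw [hF, hF]
      have := intervalIntegral.integral_add_adjacent_intervals
        (μ := MeasureTheory.volume) (a := (0:ℝ)) (b := a) (c := b)
        (hcont.intervalIntegrable _ _) (hcont.intervalIntegrable _ _)
      linarith
    have haf : a * f a ≤ a ^ 2 * (f b / b) := by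
      rcases eq_or_lt_of_le ha with h | h
      · rw [← h]; simp [hf0]
      · have := hmono (Set.mem_Ioi.mpr h) (Set.mem_Ioi.mpr hb) hab
        have h2 : f a / a ≤ f b / b := le_of_lt this
        have h3 : f a = a * (f a / a) := by field_simp
        nlinarith
    have hfb : b * f b = b ^ 2 * (f b / b) := by field_simp
    rw [hH, hH]
    rw [hval] at hint
    nlinarith [hint, hFab]
  have hmonoH : StrictMonoOn H (Set.Ici (0:ℝ)) := by
    intro a ha b _ hab
    exact key a b ha hab
  refine ⟨hHeven, hmonoH, ?_⟩
  intro s hs l hl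
  rcases lt_or_gt_of_ne hs with h | h
  · have h1 : H s = H (-s) := (hHeven s).symm
    have h2 : H (l * s) = H (l * (-s)) := by
      rw [← hHeven (l * s)]; ring_nf
    rw [h1, h2]
    have : l * (-s) < -s := by nlinarith [hl.1, hl.2]
    exact key (l * (-s)) (-s) (by nlinarith [hl.1]) this
  · have : l * s < s := by nlinarith [hl.1, hl.2]
    exact key (l * s) s (by nlinarith [hl.1]) this
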